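/- Let g : [a,b] → (-∞,∞] be convex with g(r) = 0 for some r ∈ [a,b), let α ≠ 0 and β, c ∈ ℝ, and define G(x) = c + ∫_a^x e^{αt+β} g(t) dt. Then for every x ∈ (r,b], (G(x) - G(r))/(1 + e^{α(x-r)}(α(x-r) - 1)) ≤ (G(b) - G(r))/(1 + e^{α(b-r)}(α(b-r) - 1)). -/

import Mathlib

open MeasureTheory intervalIntegral

lemma denom_pos {z : ℝ} (hz : z ≠ 0) : 0 < 1 + Real.exp z * (z - 1) := by
  have h1 := Real.add_one_lt_exp (show -z ≠ 0 by simpa using hz)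
  rw [Real.exp_neg, inv_eq_one_div] at h1
  have h2 := Real.exp_pos z
  have h3 := (lt_div_iff₀ h2).mp h1
  nlinarith [h3]

lemma key_int (α β r : ℝ) (hα : α ≠ 0) (s u : ℝ) :
    ∫ t in s..u, Real.exp (α * t + β) * (t - r) =
      (Real.exp (α * r + β) / α ^ 2) * (1 + Real.exp (α * (u - r)) * (α * (u - r) - 1))
      - (Real.exp (α * r + β) / α ^ 2) * (1 + Real.exp (α * (s - r)) * (α * (s - r) - 1)) := by
  have hderiv : ∀ t : ℝ, HasDerivAt
      (fun t => (Real.exp (α * r + β) / α ^ 2) * (1 + Real.exp (α * (t - r)) * (α * (t - r) - 1)))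
      (Real.exp (α * t + β) * (t - r)) t := by
    intro t
    have h1 : HasDerivAt (fun t : ℝ => α * (t - r)) α t := by
      simpa using ((hasDerivAt_id t).sub_const r).const_mul α
    have h2 := h1.exp
    have h3 := h2.mul (h1.sub_const 1)
    have h4 := ((h3.const_add 1).const_mul (Real.exp (α * r + β) / α ^ 2))
    refine h4.congr_deriv ?_
    symm
    have he : Real.exp (α * t + β) = Real.exp (α * r + β) * Real.exp (α * (t - r)) := by
      rw [← Real.exp_add]; ring_nf
    rw [he]
    field_simp
    ring
  rw [intervalIntegral.integral_eq_sub_of_hasDerivAt (fun t _ => hderiv t)]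
  exact (Continuous.intervalIntegrable (by fun_prop) s u)

theorem convex_weighted_integral_ratio (a b r α β c : ℝ) (g : ℝ → ℝ)
    (hab : a ≤ b) (hr : r ∈ Set.Ico a b) (hα : α ≠ 0)
    (hg : ConvexOn ℝ (Set.Icc a b) g) (hgr : g r = 0)
    (hgi : IntervalIntegrable (fun t => Real.exp (α * t + β) * g t) volume a b)
    (G : ℝ → ℝ) (hG : G = fun x => c + ∫ t in a..x, Real.exp (α * t + β) * g t) :
    ∀ x ∈ Set.Ioc r b,
      (G x - G r) / (1 + Real.exp (α * (x - r)) * (α * (x - r) - 1))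
        ≤ (G b - G r) / (1 + Real.exp (α * (b - r)) * (α * (b - r) - 1)) := by
  intro x hx
  obtain ⟨hrx, hxb⟩ := hx
  obtain ⟨har, hrb⟩ := hr
  have hax : a ≤ x := har.trans hrx.le
  have harr : a ≤ r := har
  have hrbmem : r ∈ Set.Icc a b := ⟨har, hrb.le⟩
  have hxmem : x ∈ Set.Icc a b := ⟨hax, hxb⟩
  have hxr : 0 < x - r := by linarith
  -- shorthand
  set w : ℝ → ℝ := fun t => Real.exp (α * t + β) * g t with hw
  set m : ℝ := g x / (x - r) with hm
  set C : ℝ := Real.exp (α * r + β) / α ^ 2 with hC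
  set Dx : ℝ := 1 + Real.exp (α * (x - r)) * (α * (x - r) - 1) with hDx
  set Db : ℝ := 1 + Real.exp (α * (b - r)) * (α * (b - r) - 1) with hDb
  have hCpos : 0 < C := by positivity
  have hDxpos : 0 < Dx := denom_pos (by
    have : x - r ≠ 0 := by linarith
    exact mul_ne_zero hα this)
  have hDbpos : 0 < Db := denom_pos (by
    have : b - r ≠ 0 := by linarith
    exact mul_ne_zero hα this)
  -- subinterval integrability
  have hsub : ∀ s u : ℝ, a ≤ s → s ≤ u → u ≤ b → IntervalIntegrable w volume s u := by
    intro s u h1 h2 h3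
    apply hgi.mono_set
    rw [Set.uIcc_of_le h2, Set.uIcc_of_le hab]
    exact Set.Icc_subset_Icc h1 h3
  have hint_ar : IntervalIntegrable w volume a r := hsub a r le_rfl har hrb.le
  have hint_rx : IntervalIntegrable w volume r x := hsub r x har hrx.le hxb
  have hint_xb : IntervalIntegrable w volume x b := hsub x b hax hxb le_rfl
  have hint_ax : IntervalIntegrable w volume a x := hsub a x le_rfl hax hxb
  -- the integral identities for the weight (t-r) exp
  have kint_rx := key_int α β r hα r x
  have kint_xb := key_int α β r hα x b
  have hzero : (1 : ℝ) + Real.exp (α * (r - r)) * (α * (r - r) - 1) = 0 := by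
    simp
  rw [hzero, mul_zero, sub_zero] at kint_rx
  rw [← hC, ← hDx] at kint_rx
  rw [← hC, ← hDx, ← hDb] at kint_xb
  -- G differences
  have hGx : G x - G r = ∫ t in r..x, w t := by
    rw [hG]
    simp only
    rw [← intervalIntegral.integral_add_adjacent_intervals hint_ar hint_rx]
    ring
  have hGb : G b - G r = (∫ t in r..x, w t) + ∫ t in x..b, w t := by
    rw [hG]
    simp only
    rw [← intervalIntegral.integral_add_adjacent_intervals hint_ar
      ((hint_rx.trans hint_xb))]
    rw [← intervalIntegral.integral_add_adjacent_intervals hint_rx hint_xb]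
    ring
  -- convexity pointwise bounds
  have conv_le : ∀ t ∈ Set.Icc r x, g t ≤ m * (t - r) := by
    intro t ht
    obtain ⟨h1, h2⟩ := ht
    have key := hg.2 hrbmem hxmem
      (show 0 ≤ (x - t)/(x - r) from div_nonneg (by linarith) (by linarith))
      (show 0 ≤ (t - r)/(x - r) from div_nonneg (by linarith) (by linarith))
      (by field_simp; ring)
    have hpt : ((x - t)/(x - r)) • r + ((t - r)/(x - r)) • x = t := by
      simp only [smul_eq_mul]
      field_simp
      ring
    rw [hpt, hgr] at key
    simp only [smul_eq_mul] at key
    rw [hm]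
    calc g t ≤ (x - t)/(x - r) * 0 + (t - r)/(x - r) * g x := key
      _ = g x / (x - r) * (t - r) := by ring
  have conv_ge : ∀ t ∈ Set.Icc x b, m * (t - r) ≤ g t := by
    intro t ht
    obtain ⟨h1, h2⟩ := ht
    have htr : 0 < t - r := by linarith
    have htmem : t ∈ Set.Icc a b := ⟨hax.trans h1, h2⟩
    have key := hg.2 hrbmem htmem
      (show 0 ≤ (t - x)/(t - r) from div_nonneg (by linarith) (by linarith))
      (show 0 ≤ (x - r)/(t - r) from div_nonneg (by linarith) (by linarith))
      (by field_simp; ring)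
    have hpt : ((t - x)/(t - r)) • r + ((x - r)/(t - r)) • t = x := by
      simp only [smul_eq_mul]
      field_simp
      ring
    rw [hpt, hgr] at key
    simp only [smul_eq_mul] at key
    rw [hm, div_mul_eq_mul_div, div_le_iff₀ hxr]
    have : g x ≤ (x - r)/(t - r) * g t := by linarith
    calc g x * (t - r) ≤ ((x - r)/(t - r) * g t) * (t - r) := by
          exact mul_le_mul_of_nonneg_right this htr.le
      _ = g t * (x - r) := by field_simp
  -- integrability of comparison functions
  have hcont : ∀ s u : ℝ, IntervalIntegrable (fun t => m * (Real.exp (α * t + β) * (t - r))) volume s u :=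
    fun s u => (Continuous.intervalIntegrable (by fun_prop) s u)
  -- integral bounds
  have Ia : (∫ t in r..x, w t) ≤ m * (C * Dx) := by
    have h1 : (∫ t in r..x, w t) ≤ ∫ t in r..x, m * (Real.exp (α * t + β) * (t - r)) := by
      apply intervalIntegral.integral_mono_on hrx.le hint_rx (hcont r x)
      intro t ht
      have := conv_le t ht
      have hexp : 0 < Real.exp (α * t + β) := Real.exp_pos _
      calc w t = Real.exp (α * t + β) * g t := rfl
        _ ≤ Real.exp (α * t + β) * (m * (t - r)) := by
            exact mul_le_mul_of_nonneg_left this hexp.le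
        _ = m * (Real.exp (α * t + β) * (t - r)) := by ring
    rw [intervalIntegral.integral_const_mul, kint_rx] at h1
    exact h1
  have Ib : m * (C * Db - C * Dx) ≤ ∫ t in x..b, w t := by
    have h1 : (∫ t in x..b, m * (Real.exp (α * t + β) * (t - r))) ≤ ∫ t in x..b, w t := by
      apply intervalIntegral.integral_mono_on hxb (hcont x b) hint_xb
      intro t ht
      have := conv_ge t ht
      have hexp : 0 < Real.exp (α * t + β) := Real.exp_pos _
      calc m * (Real.exp (α * t + β) * (t - r))
          = Real.exp (α * t + β) * (m * (t - r)) := by ring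
        _ ≤ Real.exp (α * t + β) * g t := by
            exact mul_le_mul_of_nonneg_left this hexp.le
        _ = w t := rfl
    rw [intervalIntegral.integral_const_mul, kint_xb] at h1
    linarith [h1]
  -- Dx ≤ Db
  have hDxDb : Dx ≤ Db := by
    have hnn : 0 ≤ ∫ t in x..b, Real.exp (α * t + β) * (t - r) := by
      apply intervalIntegral.integral_nonneg hxb
      intro t ht
      have : 0 ≤ t - r := by
        have := ht.1; linarith
      positivity
    rw [kint_xb] at hnn
    nlinarith [hnn, hCpos]
  -- final algebra
  rw [div_le_div_iff₀ hDxpos hDbpos, hGx, hGb]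
  set Nx : ℝ := ∫ t in r..x, w t
  set Nb : ℝ := ∫ t in x..b, w t
  nlinarith [mul_nonneg (sub_nonneg.2 Ia) (sub_nonneg.2 hDxDb),
    mul_nonneg (sub_nonneg.2 Ib) hDxpos.le]
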